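/- Let (Ω, F, P) be a probability space, M > 0, and let Ȳ : Ω → ℝ be measurable with 0 ≤ Ȳ ≤ M pointwise and ∫ Ȳ dP < 1. Let U : Ω → ℝ be uniformly distributed on [0,1] and independent of σ(Ȳ). Then there exist a ∈ (0,1) and δ > 0 such that, setting α̃ := a·(1 + δ·Ȳ/M) and A := {U ≤ α̃·Ȳ}, the following hold: (i) a ≤ α̃ ≤ a(1+δ) < 1 pointwise; (ii) α̃·Ȳ ≤ 1 pointwise; (iii) P(A) ≤ a; (iv) the conditional expectation E[(1/α̃)·1_A | σ(Ȳ)] equals Ȳ almost surely. -/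

import Mathlib

open MeasureTheory ProbabilityTheory


lemma aux_integral {Ω : Type*} [MeasurableSpace Ω] (P : Measure Ω) [IsProbabilityMeasure P]
    (M : ℝ) (Y U : Ω → ℝ) (hYmeas : Measurable Y) (hYmem : ∀ ω, Y ω ∈ Set.Icc (0 : ℝ) M)
    (hU : Measurable U) (hUlaw : P.map U = volume.restrict (Set.Icc (0 : ℝ) 1))
    (hindep : Indep (MeasurableSpace.comap U inferInstance)
      (MeasurableSpace.comap Y inferInstance) P)
    (q t : ℝ → ℝ) (hq : Measurable q) (ht : Measurable t)
    (C : ℝ) (hqC : ∀ y, |q y| ≤ C)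
    (ht01 : ∀ y ∈ Set.Icc (0 : ℝ) M, t y ∈ Set.Icc (0 : ℝ) 1) :
    ∫ ω, q (Y ω) * ({ω' | U ω' ≤ t (Y ω')}).indicator (fun _ => (1 : ℝ)) ω ∂P
      = ∫ ω, q (Y ω) * t (Y ω) ∂P := by
  have hC0 : 0 ≤ C := le_trans (abs_nonneg _) (hqC 0)
  have hUY : IndepFun U Y P := (IndepFun_iff_Indep U Y P).2 hindep
  have hmap : P.map (fun ω => (U ω, Y ω)) = (P.map U).prod (P.map Y) :=
    (indepFun_iff_map_prod_eq_prod_map_map hU.aemeasurable hYmeas.aemeasurable).1 hUY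
  set F : ℝ × ℝ → ℝ := fun p => q p.2 * (Set.Iic (t p.2)).indicator (fun _ => (1 : ℝ)) p.1
    with hF
  have hindmeas : Measurable (fun p : ℝ × ℝ => (Set.Iic (t p.2)).indicator
      (fun _ => (1 : ℝ)) p.1) := by
    have hset : MeasurableSet {p : ℝ × ℝ | p.1 ≤ t p.2} :=
      measurableSet_le measurable_fst (ht.comp measurable_snd)
    have : (fun p : ℝ × ℝ => (Set.Iic (t p.2)).indicator (fun _ => (1 : ℝ)) p.1)
        = {p : ℝ × ℝ | p.1 ≤ t p.2}.indicator (fun _ => (1 : ℝ)) := by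
      ext p
      by_cases h : p.1 ≤ t p.2 <;>
        simp [Set.indicator_apply, Set.mem_Iic, Set.mem_setOf_eq, h]
    rw [this]
    exact measurable_const.indicator hset
  have hFmeas : Measurable F := (hq.comp measurable_snd).mul hindmeas
  have hind_le : ∀ (s : Set ℝ) (x : ℝ), |s.indicator (fun _ => (1 : ℝ)) x| ≤ 1 := by
    intro s x
    by_cases h : x ∈ s <;> simp [Set.indicator_apply, h]
  have hLHS : ∫ ω, q (Y ω) * ({ω' | U ω' ≤ t (Y ω')}).indicator (fun _ => (1 : ℝ)) ω ∂P
      = ∫ ω, F (U ω, Y ω) ∂P := by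
    refine integral_congr_ae (ae_of_all _ fun ω => ?_)
    by_cases h : U ω ≤ t (Y ω) <;>
      simp [hF, Set.indicator_apply, Set.mem_Iic, Set.mem_setOf_eq, h]
  haveI : IsProbabilityMeasure (P.map U) := Measure.isProbabilityMeasure_map hU.aemeasurable
  haveI : IsProbabilityMeasure (P.map Y) := Measure.isProbabilityMeasure_map hYmeas.aemeasurable
  have hFint : Integrable F ((P.map U).prod (P.map Y)) := by
    refine Integrable.mono' (integrable_const C) hFmeas.aestronglyMeasurable
      (ae_of_all _ fun p => ?_)
    show ‖q p.2 * (Set.Iic (t p.2)).indicator (fun _ => (1 : ℝ)) p.1‖ ≤ C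
    rw [Real.norm_eq_abs, abs_mul]
    calc |q p.2| * |(Set.Iic (t p.2)).indicator (fun _ => (1 : ℝ)) p.1|
        ≤ C * 1 := mul_le_mul (hqC _) (hind_le _ _) (abs_nonneg _) hC0
      _ = C := mul_one C
  have hRHS : ∫ ω, q (Y ω) * t (Y ω) ∂P = ∫ y, q y * t y ∂(P.map Y) :=
    (integral_map hYmeas.aemeasurable (hq.mul ht).aestronglyMeasurable).symm
  rw [hLHS, hRHS,
    ← integral_map (hU.aemeasurable.prodMk hYmeas.aemeasurable) hFmeas.aestronglyMeasurable,
    hmap, integral_prod_symm F hFint]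
  have hae : ∀ᵐ y ∂(P.map Y), y ∈ Set.Icc (0 : ℝ) M := by
    exact (ae_map_iff hYmeas.aemeasurable measurableSet_Icc).2 (ae_of_all _ hYmem)
  refine integral_congr_ae (hae.mono fun y hy => ?_)
  have hty := ht01 y hy
  show ∫ u, F (u, y) ∂(P.map U) = q y * t y
  have h1 : ∫ u, F (u, y) ∂(P.map U)
      = q y * ((P.map U) (Set.Iic (t y))).toReal := by
    simp only [hF]
    rw [integral_const_mul, integral_indicator_const (1 : ℝ) measurableSet_Iic,
      smul_eq_mul, mul_one, measureReal_def]
  rw [h1, hUlaw, Measure.restrict_apply measurableSet_Iic]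
  have hset : Set.Iic (t y) ∩ Set.Icc (0 : ℝ) 1 = Set.Icc 0 (t y) := by
    ext u
    simp only [Set.mem_inter_iff, Set.mem_Iic, Set.mem_Icc]
    exact ⟨fun h => ⟨h.2.1, h.1⟩, fun h => ⟨h.2, h.1, le_trans h.2 hty.2⟩⟩
  rw [hset, Real.volume_Icc, sub_zero, ENNReal.toReal_ofReal hty.1]

/-- Part 1 of the replication lemma (Lemma 1): a bounded nonnegative random variable `Y`
with expectation strictly below 1 can be replicated as the conditional expected loss of a
test at a data-dependent level `α̃ = a(1 + δY/M) ≥ a`, in a way that is classically valid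
at the fixed level `a`. -/
theorem stmt_3 {Ω : Type*} [MeasurableSpace Ω] (P : Measure Ω) [IsProbabilityMeasure P]
    (M : ℝ) (hM : 0 < M)
    (Y : Ω → ℝ) (hYmeas : Measurable Y) (hY0 : ∀ ω, 0 ≤ Y ω) (hYM : ∀ ω, Y ω ≤ M)
    (hYint : ∫ ω, Y ω ∂P < 1)
    (U : Ω → ℝ) (hU : Measurable U)
    (hUlaw : P.map U = volume.restrict (Set.Icc (0 : ℝ) 1))
    (hindep : Indep (MeasurableSpace.comap U inferInstance)
      (MeasurableSpace.comap Y inferInstance) P) :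
    ∃ a ∈ Set.Ioo (0 : ℝ) 1, ∃ δ > (0 : ℝ),
      -- (i) `a ≤ α̃ ≤ a(1+δ) < 1` pointwise
      (∀ ω, a ≤ a * (1 + δ * Y ω / M) ∧ a * (1 + δ * Y ω / M) ≤ a * (1 + δ)) ∧
      a * (1 + δ) < 1 ∧
      -- (ii) `α̃ · Y ≤ 1` pointwise
      (∀ ω, a * (1 + δ * Y ω / M) * Y ω ≤ 1) ∧
      -- (iii) `P(A) ≤ a` where `A = {U ≤ α̃ Y}`
      P {ω | U ω ≤ a * (1 + δ * Y ω / M) * Y ω} ≤ ENNReal.ofReal a ∧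
      -- (iv) `E[(1/α̃)·1_A | σ(Y)] = Y` a.s.
      P[fun ω => (a * (1 + δ * Y ω / M))⁻¹ *
            ({ω' | U ω' ≤ a * (1 + δ * Y ω' / M) * Y ω'}).indicator (fun _ => (1 : ℝ)) ω
          | MeasurableSpace.comap Y inferInstance] =ᵐ[P] Y := by
  have hYmem : ∀ ω, Y ω ∈ Set.Icc (0 : ℝ) M := fun ω => ⟨hY0 ω, hYM ω⟩
  have hYint' : Integrable Y P := by
    refine Integrable.mono' (integrable_const M) hYmeas.aestronglyMeasurable
      (ae_of_all _ fun ω => ?_)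
    rw [Real.norm_eq_abs, abs_of_nonneg (hY0 ω)]; exact hYM ω
  set e := ∫ ω, Y ω ∂P with he
  have hE0 : 0 ≤ e := integral_nonneg hY0
  have h1e : (0 : ℝ) < 1 + e := by linarith
  set δ : ℝ := (1 - e) / (1 + e) with hδdef
  have hδ : 0 < δ := div_pos (by linarith) h1e
  have h1δ : 1 + δ = 2 / (1 + e) := by
    rw [hδdef]; field_simp; ring
  have hkey : (1 + δ) * e ≤ 1 := by
    rw [h1δ, div_mul_eq_mul_div, div_le_one h1e]; linarith
  have h1δpos : (0 : ℝ) < 1 + δ := by linarith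
  set a : ℝ := ((1 + δ) * (M + 1))⁻¹ with hadef
  have hapos : 0 < a := inv_pos.2 (mul_pos h1δpos (by linarith))
  have haδ : a * (1 + δ) = (M + 1)⁻¹ := by
    rw [hadef]; field_simp
  have haδ1 : a * (1 + δ) < 1 := by
    rw [haδ, inv_lt_one_iff₀]; right; linarith
  have haδM : a * (1 + δ) * M ≤ 1 := by
    rw [haδ]
    rw [inv_mul_le_iff₀ (by linarith : (0:ℝ) < M + 1)]
    linarith
  have ha1 : a < 1 := by nlinarith
  -- the data-dependent level as a function of y, and g y = level * y
  have hcmeas : Measurable fun y : ℝ => a * (1 + δ * y / M) :=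
    (((measurable_id.const_mul δ).div_const M).const_add 1).const_mul a
  have hgmeas : Measurable fun y : ℝ => a * (1 + δ * y / M) * y := by
    exact hcmeas.mul measurable_id
  have hc_bounds : ∀ y ∈ Set.Icc (0 : ℝ) M,
      a ≤ a * (1 + δ * y / M) ∧ a * (1 + δ * y / M) ≤ a * (1 + δ) := by
    intro y hy
    obtain ⟨hy0, hyM⟩ := hy
    have h1 : 0 ≤ δ * y / M := div_nonneg (mul_nonneg hδ.le hy0) hM.le
    have h2 : δ * y / M ≤ δ := by
      rw [div_le_iff₀ hM]
      nlinarith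
    constructor
    · nlinarith
    · nlinarith
  have hg01 : ∀ y ∈ Set.Icc (0 : ℝ) M,
      (a * (1 + δ * y / M) * y) ∈ Set.Icc (0 : ℝ) 1 := by
    intro y hy
    obtain ⟨hy0, hyM⟩ := hy
    have hc := hc_bounds y ⟨hy0, hyM⟩
    constructor
    · exact mul_nonneg (le_trans hapos.le hc.1) hy0
    · calc a * (1 + δ * y / M) * y ≤ a * (1 + δ) * M :=
            mul_le_mul hc.2 hyM hy0 (by nlinarith)
        _ ≤ 1 := haδM
  refine ⟨a, ⟨hapos, ha1⟩, δ, hδ, fun ω => hc_bounds (Y ω) (hYmem ω), haδ1,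
    fun ω => (hg01 (Y ω) (hYmem ω)).2, ?_, ?_⟩
  -- (iii)
  · have hA : MeasurableSet {ω | U ω ≤ a * (1 + δ * Y ω / M) * Y ω} :=
      measurableSet_le hU (hgmeas.comp hYmeas)
    have h1 := aux_integral P M Y U hYmeas hYmem hU hUlaw hindep
      (fun _ => 1) (fun y => a * (1 + δ * y / M) * y) measurable_const hgmeas
      1 (fun y => by norm_num) hg01
    simp only [one_mul] at h1
    have h2 : ∫ ω, ({ω' | U ω' ≤ a * (1 + δ * Y ω' / M) * Y ω'}).indicator
        (fun _ => (1 : ℝ)) ω ∂P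
        = (P {ω | U ω ≤ a * (1 + δ * Y ω / M) * Y ω}).toReal := by
      rw [integral_indicator_const (1 : ℝ) hA, smul_eq_mul, mul_one, measureReal_def]
    have h3 : ∫ ω, a * (1 + δ * Y ω / M) * Y ω ∂P ≤ a := by
      have hmono : ∫ ω, a * (1 + δ * Y ω / M) * Y ω ∂P
          ≤ ∫ ω, a * (1 + δ) * Y ω ∂P := by
        refine integral_mono ?_ (hYint'.const_mul _) fun ω => ?_
        · refine Integrable.mono' (integrable_const 1)
            ((hgmeas.comp hYmeas).aestronglyMeasurable) (ae_of_all _ fun ω => ?_)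
          rw [Real.norm_eq_abs, abs_of_nonneg (hg01 (Y ω) (hYmem ω)).1]
          exact (hg01 (Y ω) (hYmem ω)).2
        · exact mul_le_mul_of_nonneg_right (hc_bounds (Y ω) (hYmem ω)).2 (hY0 ω)
      rw [integral_const_mul] at hmono
      calc ∫ ω, a * (1 + δ * Y ω / M) * Y ω ∂P ≤ a * (1 + δ) * e := hmono
        _ = a * ((1 + δ) * e) := by ring
        _ ≤ a * 1 := mul_le_mul_of_nonneg_left hkey hapos.le
        _ = a := mul_one a
    have h4 : (P {ω | U ω ≤ a * (1 + δ * Y ω / M) * Y ω}).toReal ≤ a := by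
      rw [← h2]
      calc _ = ∫ ω, a * (1 + δ * Y ω / M) * Y ω ∂P := h1
        _ ≤ a := h3
    have := ENNReal.ofReal_le_ofReal h4
    rwa [ENNReal.ofReal_toReal (measure_ne_top P _)] at this
  -- (iv)
  · have hm : MeasurableSpace.comap Y inferInstance ≤ (inferInstance : MeasurableSpace Ω) :=
      hYmeas.comap_le
    haveI : SigmaFinite (P.trim hm) := by infer_instance
    have hA : MeasurableSet {ω | U ω ≤ a * (1 + δ * Y ω / M) * Y ω} :=
      measurableSet_le hU (hgmeas.comp hYmeas)
    set f : Ω → ℝ := fun ω => (a * (1 + δ * Y ω / M))⁻¹ *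
        ({ω' | U ω' ≤ a * (1 + δ * Y ω' / M) * Y ω'}).indicator (fun _ => (1 : ℝ)) ω
      with hfdef
    have hfmeas : Measurable f :=
      ((hcmeas.comp hYmeas).inv).mul (measurable_const.indicator hA)
    have hfint : Integrable f P := by
      refine Integrable.mono' (integrable_const a⁻¹) hfmeas.aestronglyMeasurable
        (ae_of_all _ fun ω => ?_)
      rw [hfdef, Real.norm_eq_abs, abs_mul]
      have hc := (hc_bounds (Y ω) (hYmem ω)).1
      have hcpos : 0 < a * (1 + δ * Y ω / M) := lt_of_lt_of_le hapos hc
      have hinv : |(a * (1 + δ * Y ω / M))⁻¹| ≤ a⁻¹ := by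
        rw [abs_of_nonneg (inv_nonneg.2 hcpos.le)]
        exact inv_anti₀ hapos hc
      calc |(a * (1 + δ * Y ω / M))⁻¹| *
            |({ω' | U ω' ≤ a * (1 + δ * Y ω' / M) * Y ω'}).indicator (fun _ => (1 : ℝ)) ω|
          ≤ a⁻¹ * 1 := by
            refine mul_le_mul hinv ?_ (abs_nonneg _) (inv_nonneg.2 hapos.le)
            by_cases h : ω ∈ {ω' | U ω' ≤ a * (1 + δ * Y ω' / M) * Y ω'} <;>
              simp [Set.indicator_apply, h]
        _ = a⁻¹ := mul_one _
    -- clamp for global boundedness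
    set cl : ℝ → ℝ := fun y => a * (1 + δ * (max 0 (min y M)) / M) with hcl
    have hclmeas : Measurable cl := by
      apply measurable_const.mul
      apply Measurable.const_add
      exact (measurable_const.mul ((measurable_const.max
        (measurable_id.min measurable_const)))).mul_const M⁻¹ |>.comp measurable_id
    have hcl_ge : ∀ y, a ≤ cl y := by
      intro y
      have h1 : 0 ≤ δ * max 0 (min y M) / M :=
        div_nonneg (mul_nonneg hδ.le (le_max_left _ _)) hM.le
      show a ≤ a * (1 + δ * max 0 (min y M) / M)
      nlinarith [mul_nonneg hapos.le h1]
    have hcl_eq : ∀ y ∈ Set.Icc (0 : ℝ) M, cl y = a * (1 + δ * y / M) := by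
      intro y hy
      rw [hcl]
      simp only [min_eq_left hy.2, max_eq_right hy.1]
    symm
    refine ae_eq_condExp_of_forall_setIntegral_eq hm hfint
      (fun s _ _ => hYint'.integrableOn) ?_ ?_
    · rintro s ⟨B, hB, rfl⟩ -
      have hs0 : MeasurableSet (Y ⁻¹' B) := hYmeas hB
      set qB : ℝ → ℝ := B.indicator fun y => (cl y)⁻¹ with hqB
      have hqBmeas : Measurable qB := (hclmeas.inv).indicator hB
      have hqBbd : ∀ y, |qB y| ≤ a⁻¹ := by
        intro y
        rw [hqB]
        by_cases h : y ∈ B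
        · rw [Set.indicator_of_mem h, abs_of_nonneg
            (inv_nonneg.2 (le_trans hapos.le (hcl_ge y)))]
          exact inv_anti₀ hapos (hcl_ge y)
        · rw [Set.indicator_of_notMem h, abs_zero]
          exact inv_nonneg.2 hapos.le
      have haux := aux_integral P M Y U hYmeas hYmem hU hUlaw hindep
        qB (fun y => a * (1 + δ * y / M) * y) hqBmeas hgmeas a⁻¹ hqBbd hg01
      have hL : ∫ x in Y ⁻¹' B, Y x ∂P = ∫ ω, qB (Y ω) *
          (a * (1 + δ * Y ω / M) * Y ω) ∂P := by
        rw [← integral_indicator hs0]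
        refine integral_congr_ae (ae_of_all _ fun ω => ?_)
        by_cases h : Y ω ∈ B
        · have h' : ω ∈ Y ⁻¹' B := h
          have hcpos : (0:ℝ) < a * (1 + δ * Y ω / M) :=
            lt_of_lt_of_le hapos (hc_bounds (Y ω) (hYmem ω)).1
          simp only [hqB, Set.indicator_of_mem h, Set.indicator_of_mem h',
            hcl_eq (Y ω) (hYmem ω)]
          rw [inv_mul_cancel_left₀ hcpos.ne']
        · have h' : ω ∉ Y ⁻¹' B := h
          simp only [hqB, Set.indicator_of_notMem h, Set.indicator_of_notMem h', zero_mul]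
      have hR : ∫ x in Y ⁻¹' B, f x ∂P = ∫ ω, qB (Y ω) *
          ({ω' | U ω' ≤ a * (1 + δ * Y ω' / M) * Y ω'}).indicator (fun _ => (1 : ℝ)) ω ∂P := by
        rw [← integral_indicator hs0]
        refine integral_congr_ae (ae_of_all _ fun ω => ?_)
        by_cases h : Y ω ∈ B
        · have h' : ω ∈ Y ⁻¹' B := h
          simp only [hqB, Set.indicator_of_mem h, Set.indicator_of_mem h', hfdef,
            hcl_eq (Y ω) (hYmem ω)]
        · have h' : ω ∉ Y ⁻¹' B := h
          simp only [hqB, Set.indicator_of_notMem h, Set.indicator_of_notMem h', zero_mul]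
      rw [hL, hR, haux]
    · refine StronglyMeasurable.aestronglyMeasurable ?_
      refine Measurable.stronglyMeasurable ?_
      exact fun t ht => ⟨t, ht, rfl⟩
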